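/- Let p be a prime number, K the p-th cyclotomic field (CyclotomicField p ℚ), 𝓞 its ring of integers, and ζ ∈ 𝓞 a primitive p-th root of unity. For n ∈ ℤ set [n]_ζ := (ζ^n − 1)/(ζ − 1) ∈ 𝓞, which is well defined since ζ is a unit and ζ − 1 divides ζ^n − 1 for every n ∈ ℤ (for n ≥ 0, [n]_ζ = 1 + ζ + ⋯ + ζ^{n−1}). Let ∇ be the 𝓞-linear endomorphism of the module 𝓞[T, T^{-1}] of Laurent polynomials over 𝓞 determined by ∇(T^n) = [n]_ζ·T^{n−1} for all n ∈ ℤ. Then the cokernel of ∇ is a free 𝓞-module with basis given by the classes of the monomials T^{pk−1} for k ∈ ℤ. -/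

import Mathlib

open LaurentPolynomial

theorem laurent_single_mem_supported {O : Type*} [CommRing O] (s : Set ℤ) (n : ℤ) (c : O)
    (h : n ∈ s) : AddMonoidAlgebra.single n c ∈ AddMonoidAlgebra.supported O O s :=
  Finsupp.single_mem_supported O c h

/-- Auxiliary: the cokernel computation, given only the vanishing/unit properties of `b`. -/
theorem coker_aux {O : Type*} [CommRing O] [Nontrivial O] (p : ℕ) (hp : p.Prime)
    (b : ℤ → O)
    (hb0 : ∀ n : ℤ, (p : ℤ) ∣ n → b n = 0)
    (hbu : ∀ n : ℤ, ¬ (p : ℤ) ∣ n → IsUnit (b n))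
    (nabla : LaurentPolynomial O →ₗ[O] LaurentPolynomial O)
    (hnabla : ∀ n : ℤ, nabla (LaurentPolynomial.T n) = b n • LaurentPolynomial.T (n - 1)) :
    ∃ basis : Module.Basis ℤ O (LaurentPolynomial O ⧸ LinearMap.range nabla),
      ∀ k : ℤ, basis k = Submodule.Quotient.mk (LaurentPolynomial.T ((p : ℤ) * k - 1)) := by
  classical
  have hp0 : (p : ℤ) ≠ 0 := Int.natCast_ne_zero.mpr hp.ne_zero
  set S : Set ℤ := {m | (p : ℤ) ∣ m + 1} with hS
  have hTsingle : ∀ n : ℤ, (LaurentPolynomial.T n : LaurentPolynomial O) = AddMonoidAlgebra.single n 1 :=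
    fun _ => rfl
  have hsmul : ∀ (c : O) (n : ℤ),
      c • (LaurentPolynomial.T n : LaurentPolynomial O) = AddMonoidAlgebra.single n c := by
    intro c n
    rw [hTsingle]
    exact (AddMonoidAlgebra.smul_single' c n 1).trans (by rw [mul_one])
  have htop : Submodule.span O (Set.range fun n : ℤ => (LaurentPolynomial.T n : LaurentPolynomial O))
      = ⊤ := by
    have h1 := (AddMonoidAlgebra.basis ℤ O).span_eq
    exact h1
  -- the range of nabla is supported away from S
  have hrange : LinearMap.range nabla ≤ AddMonoidAlgebra.supported O O Sᶜ := by
    rw [LinearMap.range_eq_map, ← htop, Submodule.map_span, Submodule.span_le]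
    rintro x ⟨y, ⟨n, rfl⟩, rfl⟩
    rw [hnabla, hsmul]
    by_cases hn : (p : ℤ) ∣ n
    · rw [hb0 n hn, AddMonoidAlgebra.single_zero]
      exact Submodule.zero_mem _
    · refine laurent_single_mem_supported _ _ _ ?_
      simpa [hS, sub_add_cancel] using hn
  -- monomials T m with p ∤ m+1 are in the range
  have hmem : ∀ m : ℤ, ¬ (p : ℤ) ∣ (m + 1) →
      (LaurentPolynomial.T m : LaurentPolynomial O) ∈ LinearMap.range nabla := by
    intro m hm
    obtain ⟨w, hw⟩ := hbu (m + 1) hm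
    refine ⟨(↑w⁻¹ : O) • LaurentPolynomial.T (m + 1), ?_⟩
    rw [map_smul, hnabla, add_sub_cancel_right, smul_smul, ← hw, Units.inv_mul, one_smul]
  set v : ℤ → (LaurentPolynomial O ⧸ LinearMap.range nabla) :=
    fun k => Submodule.Quotient.mk (LaurentPolynomial.T ((p : ℤ) * k - 1)) with hv
  have hvdef : v = (Submodule.mkQ (LinearMap.range nabla)) ∘
      (fun k : ℤ => (LaurentPolynomial.T ((p : ℤ) * k - 1) : LaurentPolynomial O)) := rfl
  -- spanning
  have hspan : ⊤ ≤ Submodule.span O (Set.range v) := by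
    have hmap : Submodule.map (Submodule.mkQ (LinearMap.range nabla)) ⊤
        ≤ Submodule.span O (Set.range v) := by
      rw [← htop, Submodule.map_span, Submodule.span_le]
      rintro x ⟨y, ⟨n, rfl⟩, rfl⟩
      by_cases hn : (p : ℤ) ∣ (n + 1)
      · obtain ⟨k, hk⟩ := hn
        have hnk : n = (p : ℤ) * k - 1 := by omega
        exact Submodule.subset_span ⟨k, by rw [hnk]; rfl⟩
      · have h0 : (Submodule.mkQ (LinearMap.range nabla)) (LaurentPolynomial.T n) = 0 := by
          rw [Submodule.mkQ_apply, Submodule.Quotient.mk_eq_zero]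
          exact hmem n hn
        rw [h0]
        exact Submodule.zero_mem _
    rwa [Submodule.map_top, Submodule.range_mkQ] at hmap
  -- linear independence
  have hw_li : LinearIndependent O
      (fun k : ℤ => (LaurentPolynomial.T ((p : ℤ) * k - 1) : LaurentPolynomial O)) := by
    have h1 : LinearIndependent O (fun n : ℤ => (AddMonoidAlgebra.single n 1 : LaurentPolynomial O)) := by
      have := (AddMonoidAlgebra.basis ℤ O).linearIndependent
      exact this
    have hinj : Function.Injective (fun k : ℤ => (p : ℤ) * k - 1) := by
      intro a c hac
      simp only [sub_left_inj] at hac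
      exact mul_left_cancel₀ hp0 hac
    exact h1.comp (fun k : ℤ => (p : ℤ) * k - 1) hinj
  have hli : LinearIndependent O v := by
    rw [linearIndependent_iff]
    intro l hl
    rw [hvdef, ← Finsupp.apply_linearCombination] at hl
    set y := Finsupp.linearCombination O
      (fun k : ℤ => (LaurentPolynomial.T ((p : ℤ) * k - 1) : LaurentPolynomial O)) l with hy
    have hySc : y ∈ AddMonoidAlgebra.supported O O Sᶜ := by
      apply hrange
      rw [Submodule.mkQ_apply, Submodule.Quotient.mk_eq_zero] at hl
      exact hl
    have hyS : y ∈ AddMonoidAlgebra.supported O O S := by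
      rw [hy, Finsupp.linearCombination_apply]
      refine Submodule.sum_mem _ ?_
      intro k _
      show l k • LaurentPolynomial.T ((p : ℤ) * k - 1) ∈ AddMonoidAlgebra.supported O O S
      rw [hsmul]
      refine laurent_single_mem_supported _ _ _ ?_
      simp only [hS, Set.mem_setOf_eq, sub_add_cancel]
      exact ⟨k, rfl⟩
    have hy0 : y = 0 := by
      have hd := Finsupp.disjoint_supported_supported
        (M := O) (R := O) (disjoint_compl_right : Disjoint S Sᶜ)
      have hc : y.coeff = 0 := Submodule.disjoint_def.mp hd y.coeff hyS hySc
      exact (AddMonoidAlgebra.ofCoeff_coeff y).symm.trans (by rw [hc]; rfl)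
    exact linearIndependent_iff.mp hw_li l hy0
  exact ⟨Module.Basis.mk hli hspan, fun k => Module.Basis.mk_apply hli hspan k⟩

/-- Let `p` be a prime, `K` the `p`-th cyclotomic field over `ℚ`, `𝓞` its
ring of integers, `ζ ∈ 𝓞` a primitive `p`-th root of unity (a unit `u` of `𝓞`), and for
`n : ℤ` let `b n = [n]_ζ = (ζⁿ - 1)/(ζ - 1)`, characterized by `b n · (ζ - 1) = ζⁿ - 1`.
Let `nabla` be the `𝓞`-linear endomorphism of the Laurent polynomials `𝓞[T,T⁻¹]` with
`nabla(Tⁿ) = [n]_ζ·Tⁿ⁻¹`. Then the cokernel of `nabla` is a free `𝓞`-module with basis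
the classes of the monomials `T^{pk-1}`, `k ∈ ℤ`. -/
theorem coker_q_deRham_at_root_of_unity
    (p : ℕ) (hp : p.Prime)
    (ζ : NumberField.RingOfIntegers (CyclotomicField p ℚ))
    (hζ : IsPrimitiveRoot ζ p)
    (u : (NumberField.RingOfIntegers (CyclotomicField p ℚ))ˣ)
    (hu : (u : NumberField.RingOfIntegers (CyclotomicField p ℚ)) = ζ)
    (b : ℤ → NumberField.RingOfIntegers (CyclotomicField p ℚ))
    (hb : ∀ n : ℤ, b n * (ζ - 1) =
      ((u ^ n : (NumberField.RingOfIntegers (CyclotomicField p ℚ))ˣ) :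
        NumberField.RingOfIntegers (CyclotomicField p ℚ)) - 1)
    (nabla : LaurentPolynomial (NumberField.RingOfIntegers (CyclotomicField p ℚ))
      →ₗ[NumberField.RingOfIntegers (CyclotomicField p ℚ)]
        LaurentPolynomial (NumberField.RingOfIntegers (CyclotomicField p ℚ)))
    (hnabla : ∀ n : ℤ, nabla (LaurentPolynomial.T n) = b n • LaurentPolynomial.T (n - 1)) :
    ∃ basis : Module.Basis ℤ (NumberField.RingOfIntegers (CyclotomicField p ℚ))
      (LaurentPolynomial (NumberField.RingOfIntegers (CyclotomicField p ℚ)) ⧸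
        LinearMap.range nabla),
      ∀ k : ℤ, basis k =
        Submodule.Quotient.mk (LaurentPolynomial.T ((p : ℤ) * k - 1)) := by
  have hζ1 : ζ - 1 ≠ 0 := sub_ne_zero.mpr (hζ.ne_one hp.one_lt)
  have hup : u ^ p = 1 := by
    ext
    rw [Units.val_pow_eq_pow_val, hu, hζ.pow_eq_one, Units.val_one]
  -- b vanishes on multiples of p
  have hb0 : ∀ n : ℤ, (p : ℤ) ∣ n → b n = 0 := by
    rintro n ⟨k, rfl⟩
    have h1 : u ^ ((p : ℤ) * k) = 1 := by
      rw [zpow_mul, zpow_natCast, hup, one_zpow]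
    have h := hb ((p : ℤ) * k)
    rw [h1, Units.val_one, sub_self] at h
    rcases mul_eq_zero.mp h with h' | h'
    · exact h'
    · exact absurd h' hζ1
  -- b is a unit away from multiples of p
  have hbu : ∀ n : ℤ, ¬ (p : ℤ) ∣ n → IsUnit (b n) := by
    intro n hn
    have hppos : (0 : ℤ) < (p : ℤ) := Int.natCast_pos.mpr hp.pos
    set m : ℕ := (n % (p : ℤ)).toNat with hm
    have hcast : ((m : ℤ)) = n % (p : ℤ) :=
      Int.toNat_of_nonneg (Int.emod_nonneg n (ne_of_gt hppos))
    have hun : u ^ n = u ^ m := by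
      have hdecomp : n = (p : ℤ) * (n / (p : ℤ)) + n % (p : ℤ) := (Int.mul_ediv_add_emod n _).symm
      calc u ^ n = u ^ ((p : ℤ) * (n / (p : ℤ)) + n % (p : ℤ)) := by rw [← hdecomp]
        _ = (u ^ ((p : ℤ) * (n / (p : ℤ)))) * u ^ (n % (p : ℤ)) := zpow_add u _ _
        _ = u ^ (n % (p : ℤ)) := by rw [zpow_mul, zpow_natCast, hup, one_zpow, one_mul]
        _ = u ^ (m : ℤ) := by rw [hcast]
        _ = u ^ m := zpow_natCast u m
    have hbn : b n * (ζ - 1) = ζ ^ m - 1 := by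
      have h := hb n
      rw [hun] at h
      rw [h, Units.val_pow_eq_pow_val, hu]
    have hpm : ¬ p ∣ m := by
      intro hdvd
      apply hn
      have h1 : (p : ℤ) ∣ n % (p : ℤ) := by
        rw [← hcast]
        exact Int.natCast_dvd_natCast.mpr hdvd
      have h2 := dvd_add (dvd_mul_right (p : ℤ) (n / (p : ℤ))) h1
      rwa [Int.mul_ediv_add_emod] at h2
    have hcop : Nat.Coprime m p :=
      Nat.coprime_comm.mp ((Nat.Prime.coprime_iff_not_dvd hp).mpr hpm)
    obtain ⟨j, -, hj⟩ := Nat.exists_mul_mod_eq_one_of_coprime hcop hp.one_lt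
    have hmj : p * (m * j / p) + 1 = m * j := by
      rw [← hj]
      exact Nat.div_add_mod (m * j) p
    have hzmj : ζ ^ (m * j) = ζ := by
      rw [← hmj, pow_add, pow_mul, hζ.pow_eq_one, one_pow, one_mul, pow_one]
    have d1 : ζ - 1 ∣ ζ ^ m - 1 := by simpa using sub_dvd_pow_sub_pow ζ 1 m
    have d2 : ζ ^ m - 1 ∣ ζ - 1 := by
      have h := sub_dvd_pow_sub_pow (ζ ^ m) 1 j
      rwa [← pow_mul, hzmj, one_pow] at h
    obtain ⟨c, hc⟩ := d1
    obtain ⟨d, hd⟩ := d2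
    have hbc : b n = c := by
      apply mul_right_cancel₀ hζ1
      rw [hbn, hc, mul_comm]
    have hcd : c * d = 1 := by
      have h1 : (ζ - 1) * 1 = (ζ - 1) * (c * d) := by
        rw [mul_one]
        calc ζ - 1 = (ζ ^ m - 1) * d := hd
          _ = ((ζ - 1) * c) * d := by rw [hc]
          _ = (ζ - 1) * (c * d) := by ring
      exact (mul_left_cancel₀ hζ1 h1).symm
    rw [hbc]
    exact IsUnit.of_mul_eq_one d hcd
  exact coker_aux p hp b hb0 hbu nabla hnabla
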